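/- Let $q$ be a prime power with $q \bmod n \in D_0$ (the principal Whiteman class of order 6 modulo $n = n_1 n_2$), and let $d_j(x) = \prod_{i \in D_j}(x - \beta^i)$ for $0 \le j \le 5$, where $\beta$ is a primitive $n$-th root of unity in $\mathrm{GF}(q^m)$, $m$ the order of $q$ mod $n$. Then each $d_j(x)$ has all coefficients in $\mathrm{GF}(q)$, and $x^n - 1 = \frac{(x^{n_1}-1)(x^{n_2}-1)}{x-1} \prod_{j=0}^{5} d_j(x)$ over $\mathrm{GF}(q)$. -/

import Mathlib

open Finset Polynomial

/-- The Whiteman generalized cyclotomic class `D_i` of order 6 modulo `n = n1 * n2`,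
given a common primitive root `g` and the CRT element `x`. -/
def whitemanD (n1 n2 g x : ℕ) (i : ℕ) : Finset ℕ :=
  (Finset.range ((n1 - 1) * (n2 - 1) / 6)).image (fun s => g ^ s * x ^ i % (n1 * n2))

/-- The set `{k * a : 1 ≤ k ≤ b - 1}` of nonzero multiples of `a` below `a * b`. -/
def multSet (a b : ℕ) : Finset ℕ :=
  (Finset.Icc 1 (b - 1)).image (fun k => k * a)

lemma mem_range_of_pow_card (F K : Type*) [Field F] [Fintype F] [Field K] [Algebra F K]
    {a : K} (ha : a ^ (Fintype.card F) = a) : a ∈ Set.range (algebraMap F K) := by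
  classical
  set q := Fintype.card F with hq
  have hq2 : 1 < q := Fintype.one_lt_card
  set p : Polynomial K := X ^ q - X with hp
  have hpne : p ≠ 0 := by
    intro h
    have := congrArg (fun r => Polynomial.coeff r q) h
    simp only [hp, Polynomial.coeff_sub, Polynomial.coeff_X_pow, if_pos rfl,
      Polynomial.coeff_X, Polynomial.coeff_zero] at this
    rw [if_neg (by omega : ¬ 1 = q)] at this
    simp at this
  set S : Finset K := Finset.univ.image (algebraMap F K) with hS
  have hSsub : S ⊆ p.roots.toFinset := by
    intro z hz
    simp only [hS, Finset.mem_image] at hz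
    obtain ⟨b, -, rfl⟩ := hz
    rw [Multiset.mem_toFinset, Polynomial.mem_roots hpne]
    simp only [hp, Polynomial.IsRoot, Polynomial.eval_sub, Polynomial.eval_pow,
      Polynomial.eval_X, ← map_pow]
    rw [show b ^ q = b from FiniteField.pow_card b, sub_self]
  have hcardS : S.card = q := by
    rw [hS, Finset.card_image_of_injective _ (algebraMap F K).injective, Finset.card_univ]
  have hle : p.roots.toFinset.card ≤ q := by
    refine le_trans (Multiset.toFinset_card_le _) ?_
    refine le_trans (Polynomial.card_roots' p) ?_
    refine le_trans (Polynomial.natDegree_sub_le _ _) ?_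
    simp only [Polynomial.natDegree_X_pow, Polynomial.natDegree_X]
    omega
  have hSeq : S = p.roots.toFinset :=
    Finset.eq_of_subset_of_card_le hSsub (by omega)
  have haS : a ∈ p.roots.toFinset := by
    rw [Multiset.mem_toFinset, Polynomial.mem_roots hpne]
    simp [hp, Polynomial.IsRoot, ha]
  rw [← hSeq] at haS
  simp only [hS, Finset.mem_image] at haS
  obtain ⟨b, -, rfl⟩ := haS
  exact ⟨b, rfl⟩

lemma prod_range_X_sub {K : Type*} [CommRing K] [IsDomain K] {β : K} {n : ℕ}
    (hn : 0 < n) (hβ : IsPrimitiveRoot β n) :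
    (X : Polynomial K) ^ n - 1 = ∏ i ∈ Finset.range n, (X - C (β ^ i)) := by
  classical
  rw [Polynomial.X_pow_sub_one_eq_prod hn hβ]
  have himg : (Finset.range n).image (β ^ ·) = Polynomial.nthRootsFinset n (1 : K) := by
    refine Finset.eq_of_subset_of_card_le ?_ ?_
    · intro z hz
      simp only [Finset.mem_image] at hz
      obtain ⟨i, -, rfl⟩ := hz
      rw [Polynomial.mem_nthRootsFinset hn, ← pow_mul, mul_comm, pow_mul, hβ.pow_eq_one,
        one_pow]
    · rw [hβ.card_nthRootsFinset, Finset.card_image_of_injOn, Finset.card_range]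
      intro i hi j hj h
      exact hβ.pow_inj (Finset.mem_range.mp hi) (Finset.mem_range.mp hj) h
  rw [← himg, Finset.prod_image]
  intro i hi j hj h
  exact hβ.pow_inj (Finset.mem_range.mp hi) (Finset.mem_range.mp hj) h

lemma pow_eq_pow_of_modEq' {M : Type*} [Monoid M] {β : M} {n : ℕ} (h1 : β ^ n = 1)
    {a b : ℕ} (hab : a ≡ b [MOD n]) : β ^ a = β ^ b := by
  conv_lhs => rw [← Nat.div_add_mod a n]
  conv_rhs => rw [← Nat.div_add_mod b n]
  rw [pow_add, pow_add, pow_mul, pow_mul, h1, hab]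
  simp

theorem dj_coeffs_and_factorization
    (n1 n2 : ℕ) (hp1 : n1.Prime) (hp2 : n2.Prime) (hne : n1 ≠ n2)
    (ho1 : Odd n1) (ho2 : Odd n2)
    (hgcd : Nat.gcd (n1 - 1) (n2 - 1) = 6)
    (g x : ℕ)
    (hg1 : orderOf (g : ZMod n1) = n1 - 1)
    (hg2 : orderOf (g : ZMod n2) = n2 - 1)
    (hx1 : x % n1 = g % n1) (hx2 : x % n2 = 1 % n2)
    (q : ℕ) (F K : Type*) [Field F] [Fintype F] (hcard : Fintype.card F = q)
    [Field K] [Algebra F K]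
    (hq : Nat.Coprime q (n1 * n2))
    (hqmem : q % (n1 * n2) ∈ whitemanD n1 n2 g x 0)
    (β : K) (hβ : IsPrimitiveRoot β (n1 * n2)) :
    (∀ j < 6, ∀ k,
      (∏ i ∈ whitemanD n1 n2 g x j, (X - C (β ^ i))).coeff k
        ∈ Set.range (algebraMap F K)) ∧
    (X - 1) * ((X : Polynomial K) ^ (n1 * n2) - 1) =
      ((X : Polynomial K) ^ n1 - 1) * ((X : Polynomial K) ^ n2 - 1) *
        ∏ j ∈ Finset.range 6, ∏ i ∈ whitemanD n1 n2 g x j, (X - C (β ^ i)) := by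
  classical
  have hco : Nat.Coprime n1 n2 := (Nat.coprime_primes hp1 hp2).mpr hne
  have h61 : 6 ∣ n1 - 1 := hgcd ▸ Nat.gcd_dvd_left (n1 - 1) (n2 - 1)
  have h62 : 6 ∣ n2 - 1 := hgcd ▸ Nat.gcd_dvd_right (n1 - 1) (n2 - 1)
  have hn1_2 : 2 ≤ n1 := hp1.two_le
  have hn2_2 : 2 ≤ n2 := hp2.two_le
  have hn1_7 : 7 ≤ n1 := by have := Nat.le_of_dvd (by omega) h61; omega
  have hn2_7 : 7 ≤ n2 := by have := Nat.le_of_dvd (by omega) h62; omega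
  have hn_pos : 0 < n1 * n2 := by positivity
  have hn_big : 1 < n1 * n2 := by nlinarith
  haveI : NeZero (n1 * n2) := ⟨by omega⟩
  haveI : Fact (1 < n1 * n2) := ⟨hn_big⟩
  haveI : Fact n1.Prime := ⟨hp1⟩
  haveI : Fact n2.Prime := ⟨hp2⟩
  set e : ℕ := (n1 - 1) * (n2 - 1) / 6 with he_def
  have he6 : e * 6 = (n1 - 1) * (n2 - 1) := Nat.div_mul_cancel (h61.mul_right _)
  have he_pos : 0 < e := by
    rcases Nat.eq_zero_or_pos e with h | h
    · rw [h] at he6; simp at he6; omega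
    · exact h
  -- units of g, x, q
  have hgu1 : IsUnit (g : ZMod n1) := by
    refine IsOfFinOrder.isUnit ?_
    rw [← orderOf_pos_iff, hg1]; omega
  have hgu2 : IsUnit (g : ZMod n2) := by
    refine IsOfFinOrder.isUnit ?_
    rw [← orderOf_pos_iff, hg2]; omega
  have hgco1 : Nat.Coprime g n1 := (ZMod.isUnit_iff_coprime g n1).mp hgu1
  have hgco2 : Nat.Coprime g n2 := (ZMod.isUnit_iff_coprime g n2).mp hgu2
  have hgco : Nat.Coprime g (n1 * n2) := Nat.Coprime.mul_right hgco1 hgco2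
  have hxz1 : (x : ZMod n1) = (g : ZMod n1) := by
    rw [← ZMod.natCast_mod x n1, ← ZMod.natCast_mod g n1, hx1]
  have hxz2 : (x : ZMod n2) = 1 := by
    rw [← ZMod.natCast_mod x n2, hx2, ZMod.natCast_mod, Nat.cast_one]
  have hxco : Nat.Coprime x (n1 * n2) := by
    refine Nat.Coprime.mul_right ?_ ?_
    · rw [← ZMod.isUnit_iff_coprime, hxz1]; exact hgu1
    · rw [← ZMod.isUnit_iff_coprime, hxz2]; exact isUnit_one
  set gu : (ZMod (n1 * n2))ˣ := ZMod.unitOfCoprime g hgco with hgu_def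
  set xu : (ZMod (n1 * n2))ˣ := ZMod.unitOfCoprime x hxco with hxu_def
  set qu : (ZMod (n1 * n2))ˣ := ZMod.unitOfCoprime q hq with hqu_def
  set gu1 : (ZMod n1)ˣ := ZMod.unitOfCoprime g hgco1 with hgu1_def
  set gu2 : (ZMod n2)ˣ := ZMod.unitOfCoprime g hgco2 with hgu2_def
  have hguv : (gu : ZMod (n1 * n2)) = (g : ZMod (n1 * n2)) := ZMod.coe_unitOfCoprime g hgco
  have hxuv : (xu : ZMod (n1 * n2)) = (x : ZMod (n1 * n2)) := ZMod.coe_unitOfCoprime x hxco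
  have hquv : (qu : ZMod (n1 * n2)) = (q : ZMod (n1 * n2)) := ZMod.coe_unitOfCoprime q hq
  -- order of gu is e
  have hord_g1 : orderOf gu1 = n1 - 1 := by
    rw [← orderOf_units, ZMod.coe_unitOfCoprime, hg1]
  have hord_g2 : orderOf gu2 = n2 - 1 := by
    rw [← orderOf_units, ZMod.coe_unitOfCoprime, hg2]
  have hord_gu : orderOf gu = e := by
    have crt := ZMod.chineseRemainder hco
    have h1 : orderOf gu = orderOf (g : ZMod (n1 * n2)) := by
      rw [← orderOf_units, hguv]
    have h2 : orderOf (g : ZMod (n1 * n2)) = orderOf (crt (g : ZMod (n1 * n2))) :=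
      (crt.toMulEquiv.orderOf_eq _).symm
    have h3 : crt ((g : ℕ) : ZMod (n1 * n2)) = ((g : ZMod n1), (g : ZMod n2)) := by
      rw [map_natCast]; rfl
    rw [h1, h2, h3, Prod.orderOf_mk, hg1, hg2]
    have := Nat.gcd_mul_lcm (n1 - 1) (n2 - 1)
    rw [hgcd] at this
    omega
  -- projections
  set π1 : (ZMod (n1 * n2))ˣ →* (ZMod n1)ˣ :=
    Units.map (ZMod.castHom (Dvd.intro n2 rfl) (ZMod n1)).toMonoidHom with hπ1_def
  set π2 : (ZMod (n1 * n2))ˣ →* (ZMod n2)ˣ :=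
    Units.map (ZMod.castHom (Dvd.intro_left n1 rfl) (ZMod n2)).toMonoidHom with hπ2_def
  have hπ1g : π1 gu = gu1 := by
    apply Units.ext
    simp [hπ1_def, hguv, hgu1_def, ZMod.coe_unitOfCoprime, map_natCast]
  have hπ2g : π2 gu = gu2 := by
    apply Units.ext
    simp [hπ2_def, hguv, hgu2_def, ZMod.coe_unitOfCoprime, map_natCast]
  have hπ1x : π1 xu = gu1 := by
    apply Units.ext
    simp [hπ1_def, hxuv, hgu1_def, ZMod.coe_unitOfCoprime, map_natCast, hxz1]
  have hπ2x : π2 xu = 1 := by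
    apply Units.ext
    simp [hπ2_def, hxuv, map_natCast, hxz2]
  -- key injectivity
  have key : ∀ s t j j' : ℕ, s < e → t < e → j < 6 → j' < 6 →
      gu ^ s * xu ^ j = gu ^ t * xu ^ j' → s = t ∧ j = j' := by
    intro s t j j' hs ht hj hj' h
    have h2 : gu2 ^ s = gu2 ^ t := by
      have := congrArg π2 h
      simpa [map_mul, map_pow, hπ2g, hπ2x] using this
    have hst : s ≡ t [MOD n2 - 1] := by
      rwa [pow_eq_pow_iff_modEq, hord_g2] at h2
    have h1 : gu1 ^ (s + j) = gu1 ^ (t + j') := by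
      have := congrArg π1 h
      simpa [map_mul, map_pow, hπ1g, hπ1x, pow_add] using this
    have hsj : s + j ≡ t + j' [MOD n1 - 1] := by
      rwa [pow_eq_pow_iff_modEq, hord_g1] at h1
    have hst6 : s ≡ t [MOD 6] := hst.of_dvd h62
    have hsj6 : s + j ≡ t + j' [MOD 6] := hsj.of_dvd h61
    have hjj : j ≡ j' [MOD 6] := Nat.ModEq.add_left_cancel hst6 hsj6
    have hjeq : j = j' := by
      have := hjj
      unfold Nat.ModEq at this
      rw [Nat.mod_eq_of_lt hj, Nat.mod_eq_of_lt hj'] at this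
      exact this
    subst hjeq
    refine ⟨?_, rfl⟩
    have hgg : gu ^ s = gu ^ t := mul_right_cancel h
    have : s ≡ t [MOD e] := by rwa [pow_eq_pow_iff_modEq, hord_gu] at hgg
    unfold Nat.ModEq at this
    rwa [Nat.mod_eq_of_lt hs, Nat.mod_eq_of_lt ht] at this
  -- classes as finsets of units
  set DzU : ℕ → Finset (ZMod (n1 * n2))ˣ :=
    fun j => (Finset.range e).image (fun s => gu ^ s * xu ^ j) with hDzU_def
  have hcard_DzU : ∀ j < 6, (DzU j).card = e := by
    intro j hj
    rw [hDzU_def, Finset.card_image_of_injOn, Finset.card_range]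
    intro s hs t ht h
    exact (key s t j j (Finset.mem_range.mp hs) (Finset.mem_range.mp ht) hj hj h).1
  have hdisj : ∀ j ∈ Finset.range 6, ∀ j' ∈ Finset.range 6, j ≠ j' →
      Disjoint (DzU j) (DzU j') := by
    intro j hj j' hj' hne'
    rw [Finset.disjoint_left]
    intro a ha ha'
    simp only [hDzU_def, Finset.mem_image, Finset.mem_range] at ha ha'
    obtain ⟨s, hs, rfl⟩ := ha
    obtain ⟨t, ht, h⟩ := ha'
    exact hne' ((key t s j' j ht hs (Finset.mem_range.mp hj') (Finset.mem_range.mp hj) h).2.symm)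
  have hbiU : (Finset.range 6).biUnion DzU = Finset.univ := by
    apply Finset.eq_univ_of_card
    rw [Finset.card_biUnion hdisj]
    have : ∑ j ∈ Finset.range 6, (DzU j).card = ∑ j ∈ Finset.range 6, e := by
      apply Finset.sum_congr rfl
      intro j hj
      exact hcard_DzU j (Finset.mem_range.mp hj)
    rw [this, Finset.sum_const, Finset.card_range, smul_eq_mul]
    rw [ZMod.card_units_eq_totient, Nat.totient_mul hco, Nat.totient_prime hp1,
      Nat.totient_prime hp2]
    omega
  -- the root-factor function on ZMod (n1*n2)
  set f : ZMod (n1 * n2) → Polynomial K := fun z => X - C (β ^ z.val) with hf_def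
  have hβ1 : β ^ (n1 * n2) = 1 := hβ.pow_eq_one
  -- whitemanD products equal unit-class products
  have hD : ∀ j < 6, ∏ i ∈ whitemanD n1 n2 g x j, (X - C (β ^ i)) =
      ∏ u ∈ DzU j, f (u : ZMod (n1 * n2)) := by
    intro j hj
    have hval : ∀ s : ℕ, ((gu ^ s * xu ^ j : (ZMod (n1 * n2))ˣ) : ZMod (n1 * n2)).val
        = g ^ s * x ^ j % (n1 * n2) := by
      intro s
      have : ((gu ^ s * xu ^ j : (ZMod (n1 * n2))ˣ) : ZMod (n1 * n2))
          = ((g ^ s * x ^ j : ℕ) : ZMod (n1 * n2)) := by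
        push_cast [hguv, hxuv]
        ring
      rw [this, ZMod.val_natCast]
    have inj2 : ∀ s ∈ Finset.range e, ∀ t ∈ Finset.range e,
        gu ^ s * xu ^ j = gu ^ t * xu ^ j → s = t := by
      intro s hs t ht h
      exact (key s t j j (Finset.mem_range.mp hs) (Finset.mem_range.mp ht) hj hj h).1
    have inj1 : ∀ s ∈ Finset.range e, ∀ t ∈ Finset.range e,
        g ^ s * x ^ j % (n1 * n2) = g ^ t * x ^ j % (n1 * n2) → s = t := by
      intro s hs t ht h
      refine inj2 s hs t ht ?_
      apply Units.ext
      have h1 := hval s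
      have h2 := hval t
      rw [h] at h1
      rw [← h2] at h1
      exact ZMod.val_injective _ h1
    rw [whitemanD, ← he_def, Finset.prod_image inj1, hDzU_def, Finset.prod_image inj2]
    apply Finset.prod_congr rfl
    intro s hs
    simp only [hf_def]
    rw [hval s]
  -- partition sets of ZMod (n1*n2)
  set S0 : Finset (ZMod (n1 * n2)) := {0} with hS0_def
  set S1 : Finset (ZMod (n1 * n2)) :=
    (Finset.Icc 1 (n2 - 1)).image (fun k => ((k * n1 : ℕ) : ZMod (n1 * n2))) with hS1_def
  set S2 : Finset (ZMod (n1 * n2)) :=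
    (Finset.Icc 1 (n1 - 1)).image (fun k => ((k * n2 : ℕ) : ZMod (n1 * n2))) with hS2_def
  set SU : Finset (ZMod (n1 * n2)) :=
    Finset.univ.image (fun u : (ZMod (n1 * n2))ˣ => (u : ZMod (n1 * n2))) with hSU_def
  have hlt1 : ∀ k : ℕ, 1 ≤ k → k ≤ n2 - 1 → k * n1 < n1 * n2 := by
    intro k h1 h2
    calc k * n1 < n2 * n1 := mul_lt_mul_of_pos_right (by omega) (by omega)
    _ = n1 * n2 := Nat.mul_comm _ _
  have hlt2 : ∀ k : ℕ, 1 ≤ k → k ≤ n1 - 1 → k * n2 < n1 * n2 := by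
    intro k h1 h2
    exact mul_lt_mul_of_pos_right (by omega) (by omega)
  have hmem1 : ∀ z : ZMod (n1 * n2), z ∈ S1 ↔
      ∃ k, 1 ≤ k ∧ k ≤ n2 - 1 ∧ z.val = k * n1 := by
    intro z
    simp only [hS1_def, Finset.mem_image, Finset.mem_Icc]
    constructor
    · rintro ⟨k, ⟨h1, h2⟩, rfl⟩
      exact ⟨k, h1, h2, ZMod.val_natCast_of_lt (hlt1 k h1 h2)⟩
    · rintro ⟨k, h1, h2, hv⟩
      refine ⟨k, ⟨h1, h2⟩, ?_⟩
      rw [← hv]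
      exact ZMod.natCast_rightInverse z
  have hmem2 : ∀ z : ZMod (n1 * n2), z ∈ S2 ↔
      ∃ k, 1 ≤ k ∧ k ≤ n1 - 1 ∧ z.val = k * n2 := by
    intro z
    simp only [hS2_def, Finset.mem_image, Finset.mem_Icc]
    constructor
    · rintro ⟨k, ⟨h1, h2⟩, rfl⟩
      exact ⟨k, h1, h2, ZMod.val_natCast_of_lt (hlt2 k h1 h2)⟩
    · rintro ⟨k, h1, h2, hv⟩
      refine ⟨k, ⟨h1, h2⟩, ?_⟩
      rw [← hv]
      exact ZMod.natCast_rightInverse z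
  have hmemU : ∀ z : ZMod (n1 * n2), z ∈ SU ↔ IsUnit z := by
    intro z
    simp only [hSU_def, Finset.mem_image, Finset.mem_univ, true_and]
    constructor
    · rintro ⟨u, rfl⟩; exact u.isUnit
    · intro h; exact ⟨h.unit, rfl⟩
  have hcover : (Finset.univ : Finset (ZMod (n1 * n2))) = S0 ∪ S1 ∪ S2 ∪ SU := by
    symm
    apply Finset.eq_univ_of_forall
    intro z
    simp only [Finset.mem_union]
    by_cases hz : IsUnit z
    · exact Or.inr ((hmemU z).mpr hz)
    left
    have hzv : ((z.val : ℕ) : ZMod (n1 * n2)) = z := ZMod.natCast_rightInverse z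
    have hnc : ¬ Nat.Coprime z.val (n1 * n2) := by
      intro hcop
      exact hz (hzv ▸ (ZMod.isUnit_iff_coprime z.val (n1 * n2)).mpr hcop)
    have hdvd : n1 ∣ z.val ∨ n2 ∣ z.val := by
      by_contra hcon
      push_neg at hcon
      refine hnc (Nat.Coprime.mul_right ?_ ?_)
      · exact (Nat.coprime_comm.mp ((Nat.Prime.coprime_iff_not_dvd hp1).mpr hcon.1))
      · exact (Nat.coprime_comm.mp ((Nat.Prime.coprime_iff_not_dvd hp2).mpr hcon.2))
    have hvlt : z.val < n1 * n2 := ZMod.val_lt z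
    rcases hdvd with ⟨k, hk⟩ | ⟨k, hk⟩
    · rcases Nat.eq_zero_or_pos k with h0 | hpos
      · left; left
        rw [hS0_def, Finset.mem_singleton, ← hzv, hk, h0]
        simp
      · left; right
        rw [hmem1]
        refine ⟨k, hpos, ?_, by rw [hk, Nat.mul_comm]⟩
        rw [hk] at hvlt
        have : k < n2 := by
          by_contra hcon
          push_neg at hcon
          have : n1 * n2 ≤ n1 * k := Nat.mul_le_mul_left _ hcon
          omega
        omega
    · rcases Nat.eq_zero_or_pos k with h0 | hpos
      · left; left
        rw [hS0_def, Finset.mem_singleton, ← hzv, hk, h0]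
        simp
      · right
        rw [hmem2]
        refine ⟨k, hpos, ?_, by rw [hk, Nat.mul_comm]⟩
        rw [hk, Nat.mul_comm] at hvlt
        have : k < n1 := by
          by_contra hcon
          push_neg at hcon
          have : n1 * n2 ≤ k * n2 := Nat.mul_le_mul_right _ hcon
          omega
        omega
  have hd01 : Disjoint S0 S1 := by
    rw [Finset.disjoint_left]
    intro z hz hz'
    rw [hS0_def, Finset.mem_singleton] at hz
    obtain ⟨k, h1, h2, hv⟩ := (hmem1 z).mp hz'
    rw [hz, ZMod.val_zero] at hv
    have := Nat.mul_eq_zero.mp hv.symm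
    omega
  have hd2 : Disjoint (S0 ∪ S1) S2 := by
    rw [Finset.disjoint_left]
    intro z hz hz'
    obtain ⟨l, hl1, hl2, hlv⟩ := (hmem2 z).mp hz'
    rw [Finset.mem_union] at hz
    rcases hz with hz | hz
    · rw [hS0_def, Finset.mem_singleton] at hz
      rw [hz, ZMod.val_zero] at hlv
      have := Nat.mul_eq_zero.mp hlv.symm
      omega
    · obtain ⟨k, h1, h2, hv⟩ := (hmem1 z).mp hz
      rw [hv] at hlv
      have hdl : n1 ∣ l * n2 := ⟨k, by rw [← hlv, Nat.mul_comm]⟩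
      have : n1 ∣ l := (Nat.Coprime.dvd_of_dvd_mul_right hco) hdl
      have := Nat.le_of_dvd (by omega) this
      omega
  have hdU : Disjoint (S0 ∪ S1 ∪ S2) SU := by
    rw [Finset.disjoint_left]
    intro z hz hz'
    have hu : IsUnit z := (hmemU z).mp hz'
    have hzv : ((z.val : ℕ) : ZMod (n1 * n2)) = z := ZMod.natCast_rightInverse z
    have hcop : Nat.Coprime z.val (n1 * n2) :=
      (ZMod.isUnit_iff_coprime z.val (n1 * n2)).mp (by rwa [hzv])
    simp only [Finset.mem_union] at hz
    rcases hz with (hz | hz) | hz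
    · rw [hS0_def, Finset.mem_singleton] at hz
      have hv0 : z.val = 0 := by rw [hz, ZMod.val_zero]
      rw [hv0] at hcop
      have := Nat.coprime_zero_left (n1 * n2) |>.mp hcop
      omega
    · obtain ⟨k, h1, h2, hv⟩ := (hmem1 z).mp hz
      have hd1 : n1 ∣ z.val := ⟨k, by rw [hv, Nat.mul_comm]⟩
      have : n1 ∣ Nat.gcd z.val (n1 * n2) := Nat.dvd_gcd hd1 ⟨n2, rfl⟩
      rw [Nat.Coprime.gcd_eq_one hcop] at this
      have := Nat.le_of_dvd one_pos this
      omega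
    · obtain ⟨k, h1, h2, hv⟩ := (hmem2 z).mp hz
      have hd2' : n2 ∣ z.val := ⟨k, by rw [hv, Nat.mul_comm]⟩
      have : n2 ∣ Nat.gcd z.val (n1 * n2) := Nat.dvd_gcd hd2' ⟨n1, Nat.mul_comm _ _⟩
      rw [Nat.Coprime.gcd_eq_one hcop] at this
      have := Nat.le_of_dvd one_pos this
      omega
  -- products over partition pieces
  have hprim2 : IsPrimitiveRoot (β ^ n1) n2 := hβ.pow hn_pos rfl
  have hprim1 : IsPrimitiveRoot (β ^ n2) n1 := hβ.pow hn_pos (Nat.mul_comm n1 n2)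
  have herase2 : (Finset.range n2).erase 0 = Finset.Icc 1 (n2 - 1) := by
    ext k
    simp only [Finset.mem_erase, Finset.mem_range, Finset.mem_Icc]
    omega
  have herase1 : (Finset.range n1).erase 0 = Finset.Icc 1 (n1 - 1) := by
    ext k
    simp only [Finset.mem_erase, Finset.mem_range, Finset.mem_Icc]
    omega
  have hX2 : (X : Polynomial K) ^ n2 - 1 = (X - 1) * ∏ z ∈ S1, f z := by
    rw [prod_range_X_sub (by omega : 0 < n2) hprim2]
    rw [← Finset.mul_prod_erase _ _ (Finset.mem_range.mpr (by omega : 0 < n2))]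
    congr 1
    · simp
    rw [herase2, hS1_def]
    have inj : ∀ k ∈ Finset.Icc 1 (n2 - 1), ∀ k' ∈ Finset.Icc 1 (n2 - 1),
        ((k * n1 : ℕ) : ZMod (n1 * n2)) = ((k' * n1 : ℕ) : ZMod (n1 * n2)) → k = k' := by
      intro k hk k' hk' h
      rw [Finset.mem_Icc] at hk hk'
      have h1 := ZMod.val_natCast_of_lt (hlt1 k hk.1 hk.2)
      have h2 := ZMod.val_natCast_of_lt (hlt1 k' hk'.1 hk'.2)
      have := congrArg ZMod.val h
      rw [h1, h2] at this
      have hn1p : 0 < n1 := by omega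
      exact Nat.eq_of_mul_eq_mul_right hn1p this
    rw [Finset.prod_image inj]
    apply Finset.prod_congr rfl
    intro k hk
    rw [Finset.mem_Icc] at hk
    simp only [hf_def]
    rw [ZMod.val_natCast_of_lt (hlt1 k hk.1 hk.2), ← pow_mul, Nat.mul_comm]
  have hX1 : (X : Polynomial K) ^ n1 - 1 = (X - 1) * ∏ z ∈ S2, f z := by
    rw [prod_range_X_sub (by omega : 0 < n1) hprim1]
    rw [← Finset.mul_prod_erase _ _ (Finset.mem_range.mpr (by omega : 0 < n1))]
    congr 1
    · simp
    rw [herase1, hS2_def]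
    have inj : ∀ k ∈ Finset.Icc 1 (n1 - 1), ∀ k' ∈ Finset.Icc 1 (n1 - 1),
        ((k * n2 : ℕ) : ZMod (n1 * n2)) = ((k' * n2 : ℕ) : ZMod (n1 * n2)) → k = k' := by
      intro k hk k' hk' h
      rw [Finset.mem_Icc] at hk hk'
      have h1 := ZMod.val_natCast_of_lt (hlt2 k hk.1 hk.2)
      have h2 := ZMod.val_natCast_of_lt (hlt2 k' hk'.1 hk'.2)
      have := congrArg ZMod.val h
      rw [h1, h2] at this
      have hn2p : 0 < n2 := by omega
      exact Nat.eq_of_mul_eq_mul_right hn2p this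
    rw [Finset.prod_image inj]
    apply Finset.prod_congr rfl
    intro k hk
    rw [Finset.mem_Icc] at hk
    simp only [hf_def]
    rw [ZMod.val_natCast_of_lt (hlt2 k hk.1 hk.2), ← pow_mul, Nat.mul_comm]
  have hPuniv : ∏ z : ZMod (n1 * n2), f z = (X : Polynomial K) ^ (n1 * n2) - 1 := by
    rw [prod_range_X_sub hn_pos hβ]
    have huniv : (Finset.univ : Finset (ZMod (n1 * n2)))
        = (Finset.range (n1 * n2)).image Nat.cast := by
      symm
      apply Finset.eq_univ_of_forall
      intro z
      rw [Finset.mem_image]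
      exact ⟨z.val, Finset.mem_range.mpr (ZMod.val_lt z), ZMod.natCast_rightInverse z⟩
    have inj : ∀ i ∈ Finset.range (n1 * n2), ∀ i' ∈ Finset.range (n1 * n2),
        ((i : ℕ) : ZMod (n1 * n2)) = ((i' : ℕ) : ZMod (n1 * n2)) → i = i' := by
      intro i hi i' hi' h
      have h1 := ZMod.val_natCast_of_lt (Finset.mem_range.mp hi)
      have h2 := ZMod.val_natCast_of_lt (Finset.mem_range.mp hi')
      have := congrArg ZMod.val h
      rwa [h1, h2] at this
    rw [huniv, Finset.prod_image inj]
    apply Finset.prod_congr rfl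
    intro i hi
    simp only [hf_def]
    rw [ZMod.val_natCast_of_lt (Finset.mem_range.mp hi)]
  have hSUprod : ∏ z ∈ SU, f z = ∏ u : (ZMod (n1 * n2))ˣ, f (u : ZMod (n1 * n2)) := by
    rw [hSU_def]
    apply Finset.prod_image
    intro u _ v _ h
    exact Units.ext h
  have hGoal2 : ∏ j ∈ Finset.range 6, ∏ i ∈ whitemanD n1 n2 g x j, (X - C (β ^ i))
      = ∏ z ∈ SU, f z := by
    rw [Finset.prod_congr rfl (fun j hj => hD j (Finset.mem_range.mp hj))]
    rw [← Finset.prod_biUnion (fun a ha b hb hab => hdisj a ha b hb hab)]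
    rw [hbiU, hSUprod]
  have hP0 : ∏ z ∈ S0, f z = X - 1 := by
    rw [hS0_def, Finset.prod_singleton]
    simp [hf_def, ZMod.val_zero]
  have hsplit : (X : Polynomial K) ^ (n1 * n2) - 1 =
      (∏ z ∈ S0, f z) * (∏ z ∈ S1, f z) * (∏ z ∈ S2, f z) * (∏ z ∈ SU, f z) := by
    rw [← hPuniv]
    show ∏ z ∈ Finset.univ, f z = _
    rw [hcover, Finset.prod_union hdU, Finset.prod_union hd2, Finset.prod_union hd01]
  -- Frobenius setup
  obtain ⟨kF, hpprime, hqpk⟩ := FiniteField.card F (ringChar F)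
  haveI : Fact (ringChar F).Prime := ⟨hpprime⟩
  haveI : CharP K (ringChar F) := charP_of_injective_algebraMap (algebraMap F K).injective _
  set φ : K →+* K := iterateFrobenius K (ringChar F) kF with hφ_def
  have hφ : ∀ a : K, φ a = a ^ q := by
    intro a
    rw [hφ_def, iterateFrobenius_def, ← hcard, hqpk]
  -- q is in the principal class
  obtain ⟨s0, hs0, hqeq⟩ := Finset.mem_image.mp hqmem
  rw [Finset.mem_range] at hs0
  have hqu_pow : qu = gu ^ s0 := by
    apply Units.ext
    rw [hquv]
    push_cast [hguv]
    rw [← ZMod.natCast_mod q (n1 * n2), ← hqeq]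
    push_cast [ZMod.natCast_mod]
    ring
  have hstab : ∀ j < 6, (DzU j).image (fun u => qu * u) = DzU j := by
    intro j hj
    apply Finset.eq_of_subset_of_card_le
    · intro v hv
      rw [Finset.mem_image] at hv
      obtain ⟨u, hu, rfl⟩ := hv
      rw [hDzU_def, Finset.mem_image] at hu ⊢
      obtain ⟨s, hs, rfl⟩ := hu
      refine ⟨(s0 + s) % e, Finset.mem_range.mpr (Nat.mod_lt _ he_pos), ?_⟩
      show gu ^ ((s0 + s) % e) * xu ^ j = qu * (gu ^ s * xu ^ j)
      have hmm : gu ^ ((s0 + s) % e) = gu ^ (s0 + s) := by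
        rw [← hord_gu]
        exact pow_mod_orderOf gu (s0 + s)
      rw [hmm, hqu_pow, ← mul_assoc, ← pow_add]
    · rw [Finset.card_image_of_injective _ (mul_right_injective qu)]
  -- map φ fixes each class polynomial
  have hmapj : ∀ j < 6, Polynomial.map φ (∏ i ∈ whitemanD n1 n2 g x j, (X - C (β ^ i)))
      = ∏ i ∈ whitemanD n1 n2 g x j, (X - C (β ^ i)) := by
    intro j hj
    rw [hD j hj, Polynomial.map_prod]
    have hterm : ∀ u ∈ DzU j, ((f (u : ZMod (n1 * n2))).map φ)
        = f ((qu * u : (ZMod (n1 * n2))ˣ) : ZMod (n1 * n2)) := by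
      intro u hu
      simp only [hf_def]
      rw [Polynomial.map_sub, Polynomial.map_X, Polynomial.map_C, hφ]
      congr 2
      rw [← pow_mul]
      apply pow_eq_pow_of_modEq' hβ1
      rw [Units.val_mul, ZMod.val_mul, hquv, ZMod.val_natCast]
      calc ((u : ZMod (n1 * n2)).val * q)
          ≡ q * (u : ZMod (n1 * n2)).val [MOD n1 * n2] := by
            rw [Nat.mul_comm ((u : ZMod (n1 * n2)).val) q]
        _ ≡ q % (n1 * n2) * (u : ZMod (n1 * n2)).val [MOD n1 * n2] :=
            Nat.ModEq.mul (Nat.mod_modEq q (n1 * n2)).symm (Nat.ModEq.refl _)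
        _ ≡ q % (n1 * n2) * (u : ZMod (n1 * n2)).val % (n1 * n2) [MOD n1 * n2] :=
            (Nat.mod_modEq _ _).symm
    rw [Finset.prod_congr rfl hterm]
    have inj : ∀ u ∈ DzU j, ∀ v ∈ DzU j, qu * u = qu * v → u = v := by
      intro u _ v _ h
      exact mul_right_injective qu h
    have himgprod : ∏ u ∈ DzU j, f ((qu * u : (ZMod (n1 * n2))ˣ) : ZMod (n1 * n2))
        = ∏ v ∈ (DzU j).image (fun u => qu * u), f (v : ZMod (n1 * n2)) :=
      (Finset.prod_image (f := fun v : (ZMod (n1 * n2))ˣ => f (v : ZMod (n1 * n2))) inj).symm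
    rw [himgprod, hstab j hj]
  constructor
  · -- coefficients lie in the image of F
    intro j hj k
    have hc := congrArg (fun P => Polynomial.coeff P k) (hmapj j hj)
    simp only [Polynomial.coeff_map] at hc
    apply mem_range_of_pow_card
    rw [hcard, ← hφ]
    exact hc
  · -- factorization
    rw [hGoal2, hX1, hX2, hsplit, hP0]
    ring
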